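/- arXiv:1408.5907 — 3 statements merged into one kernel-verified Lean document; each statement's English description precedes it below -/
import Mathlib

section
/- Let s_λ be a thresholding function satisfying |s_λ(z)| ≤ c|y| whenever |z-y| ≤ λ (C1) and |s_λ(z)-z| ≤ λ (C3). If |ẑ - d| ≤ λ, then for any 0 ≤ q < 1, |s_λ(ẑ) - d| ≤ (2λ)^{1-q} (1+c)^q |d|^q. -/
lemma min_rpow_bound (x a b q : ℝ) (hx : 0 ≤ x) (hq0 : 0 ≤ q) (hq1 : q ≤ 1)
    (ha : x ≤ a) (hb : x ≤ b) : x ≤ a ^ (1 - q) * b ^ q := by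
  have h1 : x = x ^ (1 - q) * x ^ q := by
    rw [← Real.rpow_add_of_nonneg hx (by linarith) hq0, sub_add_cancel, Real.rpow_one]
  rw [h1]
  exact mul_le_mul (Real.rpow_le_rpow hx ha (by linarith))
    (Real.rpow_le_rpow hx hb hq0) (Real.rpow_nonneg hx q)
    (Real.rpow_nonneg (hx.trans ha) _)

/-- If a thresholding function satisfies (C1) and (C3), and `|ẑ - d| ≤ λ`, then
`|s_λ(ẑ) - d| ≤ (2λ)^{1-q} (1+c)^q |d|^q` for any `0 ≤ q < 1`. -/
theorem thresholding_error_bound (c lam q : ℝ) (hc : 0 < c) (hlam : 0 ≤ lam)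
    (hq0 : 0 ≤ q) (hq1 : q < 1) (s : ℝ → ℝ)
    (hC1 : ∀ z y : ℝ, |z - y| ≤ lam → |s z| ≤ c * |y|)
    (hC3 : ∀ z : ℝ, |s z - z| ≤ lam)
    (zhat d : ℝ) (h : |zhat - d| ≤ lam) :
    |s zhat - d| ≤ (2 * lam) ^ (1 - q) * (1 + c) ^ q * |d| ^ q := by
  have hb1 : |s zhat - d| ≤ 2 * lam := by
    calc |s zhat - d| ≤ |s zhat - zhat| + |zhat - d| := abs_sub_le _ _ _
      _ ≤ lam + lam := add_le_add (hC3 zhat) h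
      _ = 2 * lam := by ring
  have hb2 : |s zhat - d| ≤ (1 + c) * |d| := by
    calc |s zhat - d| ≤ |s zhat| + |d| := abs_sub _ _
      _ ≤ c * |d| + |d| := add_le_add_left (hC1 zhat d h) _
      _ = (1 + c) * |d| := by ring
  have := min_rpow_bound _ (2 * lam) ((1 + c) * |d|) q (abs_nonneg _) hq0 hq1.le hb1 hb2
  calc |s zhat - d| ≤ (2 * lam) ^ (1 - q) * ((1 + c) * |d|) ^ q := this
    _ = (2 * lam) ^ (1 - q) * (1 + c) ^ q * |d| ^ q := by
      rw [Real.mul_rpow (by linarith) (abs_nonneg d), mul_assoc]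
end

section
/- Let s_λ satisfy (C1) and (C3) as above and let 0 ≤ q < 1. If |ẑ - d| ≤ λ, then |s_λ(ẑ) - d|² ≤ (2λ)^{2-q} (1+c)^q |d|^q. -/
/-- If a thresholding function satisfies (C1) and (C3), and `|ẑ - d| ≤ λ`, then
`|s_λ(ẑ) - d|² ≤ (2λ)^{2-q} (1+c)^q |d|^q` for any `0 ≤ q < 1`. -/
theorem thresholding_error_sq_bound (c lam q : ℝ) (hc : 0 < c) (hlam : 0 ≤ lam)
    (hq0 : 0 ≤ q) (hq1 : q < 1) (s : ℝ → ℝ)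
    (hC1 : ∀ z y : ℝ, |z - y| ≤ lam → |s z| ≤ c * |y|)
    (hC3 : ∀ z : ℝ, |s z - z| ≤ lam)
    (zhat d : ℝ) (h : |zhat - d| ≤ lam) :
    |s zhat - d| ^ 2 ≤ (2 * lam) ^ (2 - q) * (1 + c) ^ q * |d| ^ q := by
  set A := |s zhat - d| with hA
  have hA0 : 0 ≤ A := abs_nonneg _
  have h2lam : 0 ≤ 2 * lam := by linarith
  have hcd : 0 ≤ (1 + c) * |d| := by positivity
  have hA2lam : A ≤ 2 * lam := by
    calc A ≤ |s zhat - zhat| + |zhat - d| := abs_sub_le _ _ _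
      _ ≤ lam + lam := add_le_add (hC3 zhat) h
      _ = 2 * lam := by ring
  have hAcd : A ≤ (1 + c) * |d| := by
    calc A ≤ |s zhat| + |d| := abs_sub _ _
      _ ≤ c * |d| + |d| := by linarith [hC1 zhat d h]
      _ = (1 + c) * |d| := by ring
  have hRHS0 : 0 ≤ (2 * lam) ^ (2 - q) * (1 + c) ^ q * |d| ^ q := by positivity
  rcases eq_or_lt_of_le hA0 with hA0' | hApos
  · rw [← hA0']; simpa using hRHS0
  · have key : (A : ℝ) ^ (2 : ℝ) = A ^ (2 - q) * A ^ q := by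
      rw [← Real.rpow_add hApos]; ring_nf
    have h1 : A ^ (2 - q) ≤ (2 * lam) ^ (2 - q) :=
      Real.rpow_le_rpow hA0 hA2lam (by linarith)
    have h2 : A ^ q ≤ ((1 + c) * |d|) ^ q :=
      Real.rpow_le_rpow hA0 hAcd hq0
    have := mul_le_mul h1 h2 (Real.rpow_nonneg hA0 q) (Real.rpow_nonneg h2lam _)
    rw [Real.mul_rpow (by positivity) (abs_nonneg d)] at this
    calc A ^ 2 = A ^ (2 : ℝ) := by rw [← Real.rpow_natCast A 2]; norm_num
      _ = A ^ (2 - q) * A ^ q := key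
      _ ≤ (2 * lam) ^ (2 - q) * ((1 + c) ^ q * |d| ^ q) := this
      _ = (2 * lam) ^ (2 - q) * (1 + c) ^ q * |d| ^ q := by ring
end

section
/- Let r, r̂, σ_ii, σ_jj, σ̂_ii, σ̂_jj, σ_ij, σ̂_ij be reals with σ_ii, σ_jj, σ̂_ii, σ̂_jj > 0, r = σ_ij/√(σ_ii σ_jj), r̂ = σ̂_ij/√(σ̂_ii σ̂_jj), and |r| ≤ 1. Define T = max(|σ̂_ij - σ_ij|/√(σ_ii σ_jj), |σ̂_ii - σ_ii|/σ_ii, |σ̂_jj - σ_jj|/σ_jj). If T ≤ 1/2, then |r̂ - r| ≤ 4T. -/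
private lemma corr_aux (σij σhij r rh s sh T : ℝ)
    (hs : 0 < s) (hsh : 0 < sh)
    (hr : r = σij / s) (hrh : rh = σhij / sh)
    (h4 : |σij| ≤ s) (h3 : |σhij - σij| ≤ T * s)
    (hshlow : (1 - T) * s ≤ sh) (hshup : sh ≤ (1 + T) * s)
    (hT0 : 0 ≤ T) (hThalf : T ≤ 1 / 2) : |rh - r| ≤ 4 * T := by
  have hdiff : |s - sh| ≤ T * s := by
    rw [abs_le]; constructor <;> nlinarith
  have h2sh : s ≤ 2 * sh := by nlinarith
  have key : |σhij * s - σij * sh| ≤ 4 * T * (sh * s) := by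
    have e : σhij * s - σij * sh = (σhij - σij) * s + σij * (s - sh) := by ring
    calc |σhij * s - σij * sh| = |(σhij - σij) * s + σij * (s - sh)| := by rw [e]
    _ ≤ |(σhij - σij) * s| + |σij * (s - sh)| := abs_add_le _ _
    _ = |σhij - σij| * s + |σij| * |s - sh| := by
        rw [abs_mul, abs_mul, abs_of_pos hs]
    _ ≤ T * s * s + s * (T * s) := by
        exact add_le_add (mul_le_mul_of_nonneg_right h3 hs.le)
          (mul_le_mul h4 hdiff (abs_nonneg _) hs.le)
    _ ≤ 4 * T * (sh * s) := by nlinarith [mul_nonneg hT0 hs.le, mul_nonneg (mul_nonneg hT0 hs.le) (by linarith : (0:ℝ) ≤ 2 * sh - s)]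
  rw [hrh, hr, div_sub_div _ _ hsh.ne' hs.ne', abs_div, abs_of_pos (mul_pos hsh hs),
    div_le_iff₀ (mul_pos hsh hs)]
  calc |σhij * s - sh * σij| = |σhij * s - σij * sh| := by ring_nf
  _ ≤ 4 * T * (sh * s) := key

/-- If the relative errors of `σ̂_ij`, `σ̂_ii`, `σ̂_jj` are all bounded by `T ≤ 1/2`,
then the sample correlation `r̂ = σ̂_ij/√(σ̂_ii σ̂_jj)` satisfies `|r̂ - r| ≤ 4T`. -/
theorem sample_correlation_error_bound
    (σii σjj σij σhii σhjj σhij r rh T : ℝ)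
    (hσii : 0 < σii) (hσjj : 0 < σjj) (hσhii : 0 < σhii) (hσhjj : 0 < σhjj)
    (hr : r = σij / Real.sqrt (σii * σjj)) (hrh : rh = σhij / Real.sqrt (σhii * σhjj))
    (hrle : |r| ≤ 1)
    (hT : T = max (|σhij - σij| / Real.sqrt (σii * σjj))
      (max (|σhii - σii| / σii) (|σhjj - σjj| / σjj)))
    (hThalf : T ≤ 1 / 2) :
    |rh - r| ≤ 4 * T := by
  set s := Real.sqrt (σii * σjj) with hs_def
  set sh := Real.sqrt (σhii * σhjj) with hsh_def
  have hs : 0 < s := Real.sqrt_pos.mpr (mul_pos hσii hσjj)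
  have hsh : 0 < sh := Real.sqrt_pos.mpr (mul_pos hσhii hσhjj)
  have hs2 : s ^ 2 = σii * σjj := Real.sq_sqrt (le_of_lt (mul_pos hσii hσjj))
  have hsh2 : sh ^ 2 = σhii * σhjj := Real.sq_sqrt (le_of_lt (mul_pos hσhii hσhjj))
  have hT0 : 0 ≤ T := by
    rw [hT]
    exact le_trans (div_nonneg (abs_nonneg _) hs.le) (le_max_left _ _)
  -- bounds from T
  have h1 : |σhii - σii| ≤ T * σii := by
    have : |σhii - σii| / σii ≤ T := by
      rw [hT]; exact le_trans (le_max_left _ _) (le_max_right _ _)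
    calc |σhii - σii| = |σhii - σii| / σii * σii := by field_simp
    _ ≤ T * σii := by exact mul_le_mul_of_nonneg_right this hσii.le
  have h2 : |σhjj - σjj| ≤ T * σjj := by
    have : |σhjj - σjj| / σjj ≤ T := by
      rw [hT]; exact le_trans (le_max_right _ _) (le_max_right _ _)
    calc |σhjj - σjj| = |σhjj - σjj| / σjj * σjj := by field_simp
    _ ≤ T * σjj := by exact mul_le_mul_of_nonneg_right this hσjj.le
  have h3 : |σhij - σij| ≤ T * s := by
    have : |σhij - σij| / s ≤ T := by rw [hT]; exact le_max_left _ _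
    calc |σhij - σij| = |σhij - σij| / s * s := by field_simp
    _ ≤ T * s := by exact mul_le_mul_of_nonneg_right this hs.le
  have h4 : |σij| ≤ s := by
    have : |σij| / s ≤ 1 := by
      rw [hr] at hrle
      rwa [abs_div, abs_of_pos hs] at hrle
    calc |σij| = |σij| / s * s := by field_simp
    _ ≤ 1 * s := mul_le_mul_of_nonneg_right this hs.le
    _ = s := one_mul s
  have h1' := abs_le.mp h1
  have h2' := abs_le.mp h2
  have hA1 : (1 - T) * σii ≤ σhii := by nlinarith [h1'.1]
  have hA2 : σhii ≤ (1 + T) * σii := by nlinarith [h1'.2]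
  have hB1 : (1 - T) * σjj ≤ σhjj := by nlinarith [h2'.1]
  have hB2 : σhjj ≤ (1 + T) * σjj := by nlinarith [h2'.2]
  have hTm : 0 ≤ 1 - T := by linarith
  have hp1 : (1 - T) * σii * ((1 - T) * σjj) ≤ σhii * σhjj :=
    mul_le_mul hA1 hB1 (mul_nonneg hTm hσjj.le) hσhii.le
  have hp2 : σhii * σhjj ≤ (1 + T) * σii * ((1 + T) * σjj) :=
    mul_le_mul hA2 hB2 hσhjj.le (mul_nonneg (by linarith) hσii.le)
  -- sh bounds
  have hq1 : ((1 - T) * s) ^ 2 = (1 - T) * σii * ((1 - T) * σjj) := by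
    rw [mul_pow, hs2]; ring
  have hq2 : ((1 + T) * s) ^ 2 = (1 + T) * σii * ((1 + T) * σjj) := by
    rw [mul_pow, hs2]; ring
  have hsq1 : ((1 - T) * s) ^ 2 ≤ sh ^ 2 := by rw [hq1, hsh2]; exact hp1
  have hsq2 : sh ^ 2 ≤ ((1 + T) * s) ^ 2 := by rw [hq2, hsh2]; exact hp2
  have hshlow : (1 - T) * s ≤ sh :=
    (pow_le_pow_iff_left₀ (mul_nonneg hTm hs.le) hsh.le (by norm_num)).mp hsq1
  have hshup : sh ≤ (1 + T) * s :=
    (pow_le_pow_iff_left₀ hsh.le (mul_nonneg (by linarith) hs.le) (by norm_num)).mp hsq2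
  exact corr_aux σij σhij r rh s sh T hs hsh hr hrh h4 h3 hshlow hshup hT0 hThalf
end
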